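/- arXiv:2309.00636 — 3 statements merged into one kernel-verified Lean document; each statement's English description precedes it below -/
import Mathlib

section
/- Define α_j(k) as: α_j(k) = (2k − (2⌊(j−1)/2⌋ + 1))!! · (1/(j−1)!) · 2^{⌊(j−1)/2⌋} · [ (k − ⌊j/2⌋)(k − (⌊j/2⌋+1)) ⋯ (k − (j−2)) ]^{𝟙{j>2}}. Then for every integer n ≥ 3 and every integer k ≥ n−1, the recursion α_n(k) = (1/(n−1)) · ( α_{n−1}(k) − α_{n−2}(k−1) ) holds. -/
open Finset

/-- The coefficient `α_j(k)` from the paper: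
`α_j(k) = (2k − (2⌊(j−1)/2⌋+1))!! · (1/(j−1)!) · 2^⌊(j−1)/2⌋ ·
  [(k−⌊j/2⌋)(k−(⌊j/2⌋+1))⋯(k−(j−2))]^{𝟙{j>2}}`,
with the convention `(−1)!! = 1` (the double-factorial argument is `−1` only when
`j = 1, k = 0`, which `Int.toNat` sends to `0`, and `0!! = 1`). -/
noncomputable def alphaCoef (j k : ℕ) : ℝ :=
  (Nat.doubleFactorial (2 * (k : ℤ) - (2 * (((j : ℤ) - 1) / 2) + 1)).toNat : ℝ)
    * ((Nat.factorial (j - 1) : ℝ))⁻¹ * 2 ^ ((j - 1) / 2)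
    * (if 2 < j then ∏ i ∈ Finset.Icc (j / 2) (j - 2), ((k : ℝ) - (i : ℝ)) else 1)

private lemma stmt3_even (b k : ℕ) (hk : 2*b+3 ≤ k) :
    alphaCoef (2*b+4) k
      = (((2*b+4 : ℕ) : ℝ) - 1)⁻¹ * (alphaCoef (2*b+3) k - alphaCoef (2*b+2) (k-1)) := by
  have hA : alphaCoef (2*b+4) k
      = (Nat.doubleFactorial (2*(k-(b+2))+1) : ℝ) * ((Nat.factorial (2*b+3) : ℝ))⁻¹ * 2^(b+1)
        * ((∏ i ∈ range b, ((k:ℝ) - ((b+2+i : ℕ) : ℝ))) * ((k:ℝ) - (2*(b:ℝ)+2))) := by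
    rw [alphaCoef]
    have e1 : (2 * (k : ℤ) - (2 * ((((2*b+4 : ℕ) : ℤ) - 1) / 2) + 1)).toNat
        = 2*(k-(b+2))+1 := by push_cast; omega
    rw [e1, if_pos (by omega : 2 < 2*b+4)]
    rw [show (2*b+4-1)/2 = b+1 from by omega, show 2*b+4-1 = 2*b+3 from by omega,
      show (2*b+4)/2 = b+2 from by omega, show 2*b+4-2 = 2*b+2 from by omega]
    rw [← Finset.Ico_add_one_right_eq_Icc, Finset.prod_Ico_eq_prod_range,
      show 2*b+2+1 - (b+2) = b+1 from by omega, Finset.prod_range_succ]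
    rw [show ((b+2+b : ℕ) : ℝ) = 2*(b:ℝ)+2 from by push_cast; ring]
  have hB : alphaCoef (2*b+3) k
      = (Nat.doubleFactorial (2*(k-(b+2))+1) : ℝ) * ((Nat.factorial (2*b+2) : ℝ))⁻¹ * 2^(b+1)
        * (((k:ℝ) - ((b:ℝ)+1)) * (∏ i ∈ range b, ((k:ℝ) - ((b+2+i : ℕ) : ℝ)))) := by
    rw [alphaCoef]
    have e1 : (2 * (k : ℤ) - (2 * ((((2*b+3 : ℕ) : ℤ) - 1) / 2) + 1)).toNat
        = 2*(k-(b+2))+1 := by push_cast; omega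
    rw [e1, if_pos (by omega : 2 < 2*b+3)]
    rw [show (2*b+3-1)/2 = b+1 from by omega, show 2*b+3-1 = 2*b+2 from by omega,
      show (2*b+3)/2 = b+1 from by omega, show 2*b+3-2 = 2*b+1 from by omega]
    rw [← Finset.Ico_add_one_right_eq_Icc, Finset.prod_Ico_eq_prod_range,
      show 2*b+1+1 - (b+1) = b+1 from by omega, Finset.prod_range_succ']
    have h2 : ∀ i ∈ range b, ((k:ℝ) - ((b+1+(i+1) : ℕ) : ℝ)) = ((k:ℝ) - ((b+2+i : ℕ) : ℝ)) := by
      intro i _; push_cast; ring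
    rw [Finset.prod_congr rfl h2,
      show ((b+1+0 : ℕ) : ℝ) = (b:ℝ)+1 from by push_cast; ring]
    ring
  have hC : alphaCoef (2*b+2) (k-1)
      = (Nat.doubleFactorial (2*(k-(b+2))+1) : ℝ) * ((Nat.factorial (2*b+1) : ℝ))⁻¹ * 2^b
        * (∏ i ∈ range b, ((k:ℝ) - ((b+2+i : ℕ) : ℝ))) := by
    rw [alphaCoef]
    have e1 : (2 * ((k-1 : ℕ) : ℤ) - (2 * ((((2*b+2 : ℕ) : ℤ) - 1) / 2) + 1)).toNat
        = 2*(k-(b+2))+1 := by push_cast; omega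
    rw [e1]
    rw [show 2*b+2-1 = 2*b+1 from by omega, show (2*b+1)/2 = b from by omega]
    rcases Nat.eq_zero_or_pos b with rfl | hb
    · rw [if_neg (by omega : ¬ 2 < 2*0+2)]
      simp
    · rw [if_pos (by omega : 2 < 2*b+2)]
      rw [show (2*b+2)/2 = b+1 from by omega, show 2*b+2-2 = 2*b from by omega]
      rw [← Finset.Ico_add_one_right_eq_Icc, Finset.prod_Ico_eq_prod_range,
        show 2*b+1 - (b+1) = b from by omega]
      have h2 : ∀ i ∈ range b,
          (((k-1 : ℕ):ℝ) - ((b+1+i : ℕ) : ℝ)) = ((k:ℝ) - ((b+2+i : ℕ) : ℝ)) := by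
        intro i _
        have h1 : 1 ≤ k := by omega
        push_cast [h1]
        ring
      rw [Finset.prod_congr rfl h2]
  rw [hA, hB, hC]
  have f3 : ((Nat.factorial (2*b+3) : ℝ)) = ((2*b+3 : ℕ) : ℝ) * (Nat.factorial (2*b+2) : ℝ) := by
    rw [show 2*b+3 = (2*b+2)+1 from by omega, Nat.factorial_succ]; push_cast; ring
  have f2 : ((Nat.factorial (2*b+2) : ℝ)) = ((2*b+2 : ℕ) : ℝ) * (Nat.factorial (2*b+1) : ℝ) := by
    rw [show 2*b+2 = (2*b+1)+1 from by omega, Nat.factorial_succ]; push_cast; ring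
  rw [f3, f2]
  have h1 : (Nat.factorial (2*b+1) : ℝ) ≠ 0 := Nat.cast_ne_zero.mpr (Nat.factorial_ne_zero _)
  have hb0 : (0:ℝ) ≤ (b:ℝ) := Nat.cast_nonneg b
  push_cast
  have h4 : 2*(b:ℝ)+4 - 1 ≠ 0 := by nlinarith
  have h3 : 2*(b:ℝ)+2 ≠ 0 := by nlinarith
  have h2 : 2*(b:ℝ)+3 ≠ 0 := by nlinarith
  field_simp
  ring

private lemma stmt3_odd (b k : ℕ) (hk : 2*b+2 ≤ k) :
    alphaCoef (2*b+3) k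
      = (((2*b+3 : ℕ) : ℝ) - 1)⁻¹ * (alphaCoef (2*b+2) k - alphaCoef (2*b+1) (k-1)) := by
  have hA : alphaCoef (2*b+3) k
      = (Nat.doubleFactorial (2*(k-(b+2))+1) : ℝ) * ((Nat.factorial (2*b+2) : ℝ))⁻¹ * 2^(b+1)
        * ((∏ i ∈ range b, ((k:ℝ) - ((b+1+i : ℕ) : ℝ))) * ((k:ℝ) - (2*(b:ℝ)+1))) := by
    rw [alphaCoef]
    have e1 : (2 * (k : ℤ) - (2 * ((((2*b+3 : ℕ) : ℤ) - 1) / 2) + 1)).toNat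
        = 2*(k-(b+2))+1 := by push_cast; omega
    rw [e1, if_pos (by omega : 2 < 2*b+3)]
    rw [show (2*b+3-1)/2 = b+1 from by omega, show 2*b+3-1 = 2*b+2 from by omega,
      show (2*b+3)/2 = b+1 from by omega, show 2*b+3-2 = 2*b+1 from by omega]
    rw [← Finset.Ico_add_one_right_eq_Icc, Finset.prod_Ico_eq_prod_range,
      show 2*b+1+1 - (b+1) = b+1 from by omega, Finset.prod_range_succ]
    rw [show ((b+1+b : ℕ) : ℝ) = 2*(b:ℝ)+1 from by push_cast; ring]
  have hB : alphaCoef (2*b+2) k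
      = ((2*(k:ℝ) - 2*(b:ℝ) - 1) * (Nat.doubleFactorial (2*(k-(b+2))+1) : ℝ))
        * ((Nat.factorial (2*b+1) : ℝ))⁻¹ * 2^b
        * (∏ i ∈ range b, ((k:ℝ) - ((b+1+i : ℕ) : ℝ))) := by
    rw [alphaCoef]
    have e1 : (2 * (k : ℤ) - (2 * ((((2*b+2 : ℕ) : ℤ) - 1) / 2) + 1)).toNat
        = (2*(k-(b+2))+1)+2 := by push_cast; omega
    rw [e1, Nat.doubleFactorial_add_two]
    rw [show (((2*(k-(b+2))+1+2) * Nat.doubleFactorial (2*(k-(b+2))+1) : ℕ) : ℝ)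
        = (2*(k:ℝ) - 2*(b:ℝ) - 1) * (Nat.doubleFactorial (2*(k-(b+2))+1) : ℝ) from by
      push_cast [Nat.cast_sub (show b+2 ≤ k by omega)]; ring]
    rw [show (2*b+2-1)/2 = b from by omega, show 2*b+2-1 = 2*b+1 from by omega]
    rcases Nat.eq_zero_or_pos b with rfl | hb
    · rw [if_neg (by omega : ¬ 2 < 2*0+2)]
      simp
    · rw [if_pos (by omega : 2 < 2*b+2)]
      rw [show (2*b+2)/2 = b+1 from by omega, show 2*b+2-2 = 2*b from by omega]
      rw [← Finset.Ico_add_one_right_eq_Icc, Finset.prod_Ico_eq_prod_range,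
        show 2*b+1 - (b+1) = b from by omega]
  have hC : alphaCoef (2*b+1) (k-1)
      = (Nat.doubleFactorial (2*(k-(b+2))+1) : ℝ) * ((Nat.factorial (2*b) : ℝ))⁻¹ * 2^b
        * (∏ i ∈ range b, ((k:ℝ) - ((b+1+i : ℕ) : ℝ))) := by
    rw [alphaCoef]
    have e1 : (2 * ((k-1 : ℕ) : ℤ) - (2 * ((((2*b+1 : ℕ) : ℤ) - 1) / 2) + 1)).toNat
        = 2*(k-(b+2))+1 := by push_cast; omega
    rw [e1]
    rw [show 2*b+1-1 = 2*b from by omega, show (2*b)/2 = b from by omega]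
    rcases Nat.eq_zero_or_pos b with rfl | hb
    · rw [if_neg (by omega : ¬ 2 < 2*0+1)]
      simp
    · rw [if_pos (by omega : 2 < 2*b+1)]
      rw [show (2*b+1)/2 = b from by omega, show 2*b+1-2 = 2*b-1 from by omega]
      rw [← Finset.Ico_add_one_right_eq_Icc, Finset.prod_Ico_eq_prod_range,
        show 2*b-1+1 - b = b from by omega]
      have h2 : ∀ i ∈ range b,
          (((k-1 : ℕ):ℝ) - ((b+i : ℕ) : ℝ)) = ((k:ℝ) - ((b+1+i : ℕ) : ℝ)) := by
        intro i _
        have h1 : 1 ≤ k := by omega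
        push_cast [h1]
        ring
      rw [Finset.prod_congr rfl h2]
  rw [hA, hB, hC]
  have f2 : ((Nat.factorial (2*b+2) : ℝ)) = ((2*b+2 : ℕ) : ℝ) * (Nat.factorial (2*b+1) : ℝ) := by
    rw [show 2*b+2 = (2*b+1)+1 from by omega, Nat.factorial_succ]; push_cast; ring
  have f1 : ((Nat.factorial (2*b+1) : ℝ)) = ((2*b+1 : ℕ) : ℝ) * (Nat.factorial (2*b) : ℝ) := by
    rw [show 2*b+1 = (2*b)+1 from by omega, Nat.factorial_succ]; push_cast; ring
  rw [f2, f1]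
  have h1 : (Nat.factorial (2*b) : ℝ) ≠ 0 := Nat.cast_ne_zero.mpr (Nat.factorial_ne_zero _)
  have hb0 : (0:ℝ) ≤ (b:ℝ) := Nat.cast_nonneg b
  push_cast
  have h4 : 2*(b:ℝ)+3 - 1 ≠ 0 := by nlinarith
  have h3 : 2*(b:ℝ)+2 ≠ 0 := by nlinarith
  have h2 : 2*(b:ℝ)+1 ≠ 0 := by nlinarith
  field_simp
  ring

/-- the recursion `α_n(k) = (1/(n−1))(α_{n−1}(k) − α_{n−2}(k−1))`
for every integer `n ≥ 3` and every integer `k ≥ n−1`. -/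
theorem stmt3 (n k : ℕ) (hn : 3 ≤ n) (hk : n - 1 ≤ k) :
    alphaCoef n k = ((n : ℝ) - 1)⁻¹ * (alphaCoef (n - 1) k - alphaCoef (n - 2) (k - 1)) := by
  rcases Nat.even_or_odd n with ⟨a, ha⟩ | ⟨a, ha⟩
  · obtain ⟨b, rfl⟩ : ∃ b, n = 2*b+4 := ⟨a-2, by omega⟩
    rw [show 2*b+4-1 = 2*b+3 from by omega, show 2*b+4-2 = 2*b+2 from by omega]
    exact stmt3_even b k (by omega)
  · obtain ⟨b, rfl⟩ : ∃ b, n = 2*b+3 := ⟨a-1, by omega⟩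
    rw [show 2*b+3-1 = 2*b+2 from by omega, show 2*b+3-2 = 2*b+1 from by omega]
    exact stmt3_odd b k (by omega)
end

section
/- For α_j(k) defined as in the paper, if n > 4 and n is even, then α_{n−1}(k) − α_{n−2}(k−1) = (2k−(n−1))!! · (1/(n−2)!) · 2^{(n−2)/2} · (k − n/2)(k − (n/2+1)) ⋯ (k − (n−2)) for all integers k ≥ n−1. -/
open Finset

/-- for even `n > 4` and `k ≥ n − 1`,
`α_{n−1}(k) − α_{n−2}(k−1) = (2k−(n−1))!! (1/(n−2)!) 2^{(n−2)/2} (k−n/2)⋯(k−(n−2))`. -/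
theorem stmt9 (n k : ℕ) (hn : 4 < n) (hne : Even n) (hk : n - 1 ≤ k) :
    alphaCoef (n - 1) k - alphaCoef (n - 2) (k - 1) =
      (Nat.doubleFactorial (2 * k - (n - 1)) : ℝ) * ((Nat.factorial (n - 2) : ℝ))⁻¹
        * 2 ^ ((n - 2) / 2) * ∏ m ∈ Finset.Icc (n / 2) (n - 2), ((k : ℝ) - (m : ℝ)) := by
  obtain ⟨s, rfl⟩ : ∃ s, n = 2 * s + 6 := by
    obtain ⟨t, ht⟩ := hne
    exact ⟨t - 3, by omega⟩
  have hk5 : 2 * s + 5 ≤ k := by omega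
  unfold alphaCoef
  have e1 : 2 * s + 6 - 1 = 2 * s + 5 := by omega
  have e2 : 2 * s + 6 - 2 = 2 * s + 4 := by omega
  rw [e1, e2]
  have hd1 : (2 * (k : ℤ) - (2 * ((((2 * s + 5 : ℕ) : ℤ) - 1) / 2) + 1)).toNat
      = 2 * k - (2 * s + 5) := by omega
  have hd2 : (2 * ((k - 1 : ℕ) : ℤ) - (2 * ((((2 * s + 4 : ℕ) : ℤ) - 1) / 2) + 1)).toNat
      = 2 * k - (2 * s + 5) := by omega
  rw [hd1, hd2]
  have e3 : 2 * s + 5 - 1 = 2 * s + 4 := by omega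
  have e4 : 2 * s + 4 - 1 = 2 * s + 3 := by omega
  have e5 : (2 * s + 4) / 2 = s + 2 := by omega
  have e6 : (2 * s + 3) / 2 = s + 1 := by omega
  have e7 : (2 * s + 5) / 2 = s + 2 := by omega
  have e8 : 2 * s + 5 - 2 = 2 * s + 3 := by omega
  have e10 : 2 * s + 4 - 2 = 2 * s + 2 := by omega
  have e11 : (2 * s + 6) / 2 = s + 3 := by omega
  rw [e3, e4, e5, e6, e7, e8, e10, e11]
  rw [if_pos (by omega), if_pos (by omega)]
  rw [← Finset.Ico_add_one_right_eq_Icc, ← Finset.Ico_add_one_right_eq_Icc, ← Finset.Ico_add_one_right_eq_Icc,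
    Finset.prod_Ico_eq_prod_range, Finset.prod_Ico_eq_prod_range,
    Finset.prod_Ico_eq_prod_range]
  have r1 : 2 * s + 3 + 1 - (s + 2) = s + 2 := by omega
  have r2 : 2 * s + 2 + 1 - (s + 2) = s + 1 := by omega
  have r3 : 2 * s + 4 + 1 - (s + 3) = s + 2 := by omega
  rw [r1, r2, r3]
  have hc : ((k - 1 : ℕ) : ℝ) = (k : ℝ) - 1 := by
    push_cast [Nat.cast_sub (show 1 ≤ k by omega)]; ring
  have hQ2 : ∏ i ∈ range (s + 1), (((k - 1 : ℕ) : ℝ) - ↑(s + 2 + i))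
      = ∏ i ∈ range (s + 1), ((k : ℝ) - ↑(s + 3 + i)) := by
    refine prod_congr rfl fun i _ => ?_
    rw [hc]; push_cast; ring
  have hP1 : ∏ i ∈ range (s + 2), ((k : ℝ) - ↑(s + 2 + i))
      = (∏ i ∈ range (s + 1), ((k : ℝ) - ↑(s + 3 + i))) * ((k : ℝ) - (↑s + 2)) := by
    rw [Finset.prod_range_succ']
    congr 1
    · refine prod_congr rfl fun i _ => ?_; push_cast; ring
    · push_cast; ring
  have hR : ∏ i ∈ range (s + 2), ((k : ℝ) - ↑(s + 3 + i))
      = (∏ i ∈ range (s + 1), ((k : ℝ) - ↑(s + 3 + i))) * ((k : ℝ) - (2 * ↑s + 4)) := by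
    rw [Finset.prod_range_succ]
    congr 1
    push_cast; ring
  rw [hQ2, hP1, hR]
  have hA : ((Nat.factorial (2 * s + 4)) : ℝ)
      = (2 * ↑s + 4) * (Nat.factorial (2 * s + 3)) := by
    rw [show 2 * s + 4 = (2 * s + 3) + 1 from rfl, Nat.factorial_succ]
    push_cast; ring
  rw [hA]
  have h1 : ((Nat.factorial (2 * s + 3)) : ℝ) ≠ 0 :=
    Nat.cast_ne_zero.2 (Nat.factorial_ne_zero _)
  have h2 : (2 * (s : ℝ) + 4) ≠ 0 := by positivity
  field_simp
  ring
end

section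
/- For α_j(k) defined as in the paper, if n > 4 and n is odd, then α_{n−1}(k) − α_{n−2}(k−1) = (2k−n)!! · (1/(n−2)!) · 2^{(n−1)/2} · (k − (n−1)/2)(k − ((n−1)/2+1)) ⋯ (k − (n−2)) for all integers k ≥ n−1. -/
open Finset

/-- for odd `n > 4` and `k ≥ n − 1`,
`α_{n−1}(k) − α_{n−2}(k−1) = (2k−n)!! (1/(n−2)!) 2^{(n−1)/2} (k−(n−1)/2)⋯(k−(n−2))`. -/
theorem stmt10 (n k : ℕ) (hn : 4 < n) (hno : Odd n) (hk : n - 1 ≤ k) :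
    alphaCoef (n - 1) k - alphaCoef (n - 2) (k - 1) =
      (Nat.doubleFactorial (2 * k - n) : ℝ) * ((Nat.factorial (n - 2) : ℝ))⁻¹
        * 2 ^ ((n - 1) / 2) * ∏ m ∈ Finset.Icc ((n - 1) / 2) (n - 2), ((k : ℝ) - (m : ℝ)) := by
  obtain ⟨m, rfl⟩ := hno
  obtain ⟨r, rfl⟩ : ∃ r, m = r + 2 := ⟨m - 2, by omega⟩
  obtain ⟨c, rfl⟩ : ∃ c, k = c + (2 * r + 4) := ⟨k - (2 * r + 4), by omega⟩
  unfold alphaCoef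
  -- natural-number simplifications
  have e1 : 2 * (r + 2) + 1 - 1 = 2 * r + 4 := by omega
  have e2 : 2 * (r + 2) + 1 - 2 = 2 * r + 3 := by omega
  have e3 : c + (2 * r + 4) - 1 = c + (2 * r + 3) := by omega
  rw [e1, e2, e3]
  have t1 : (2 * ((c + (2 * r + 4) : ℕ) : ℤ) - (2 * ((((2 * r + 4 : ℕ) : ℤ) - 1) / 2) + 1)).toNat
      = 2 * c + 2 * r + 3 + 2 := by push_cast; omega
  have t2 : (2 * ((c + (2 * r + 3) : ℕ) : ℤ) - (2 * ((((2 * r + 3 : ℕ) : ℤ) - 1) / 2) + 1)).toNat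
      = 2 * c + 2 * r + 3 := by push_cast; omega
  have t3 : 2 * (c + (2 * r + 4)) - (2 * (r + 2) + 1) = 2 * c + 2 * r + 3 := by omega
  rw [t1, t2, t3]
  have e4 : (2 * r + 4) - 1 = 2 * r + 3 := by omega
  have e5 : (2 * r + 3) - 1 = 2 * r + 2 := by omega
  have e6 : (2 * r + 4) - 2 = 2 * r + 2 := by omega
  have e7 : (2 * r + 3) - 2 = 2 * r + 1 := by omega
  have e8 : (2 * r + 4) / 2 = r + 2 := by omega
  have e9 : (2 * r + 3) / 2 = r + 1 := by omega
  have e10 : (2 * r + 2) / 2 = r + 1 := by omega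
  rw [e4, e5, e6, e7, e8, e9, e10]
  have h4 : (2 : ℕ) < 2 * r + 4 := by omega
  have h3 : (2 : ℕ) < 2 * r + 3 := by omega
  rw [if_pos h4, if_pos h3]
  -- reindex the second product
  have hprod : (∏ i ∈ Finset.Icc (r + 1) (2 * r + 1), (((c + (2 * r + 3) : ℕ) : ℝ) - (i : ℝ)))
      = ∏ i ∈ Finset.Icc (r + 2) (2 * r + 2), (((c + (2 * r + 4) : ℕ) : ℝ) - (i : ℝ)) := by
    have := Finset.map_add_left_Icc (r + 1) (2 * r + 1) 1
    rw [show r + 2 = 1 + (r + 1) by omega, show 2 * r + 2 = 1 + (2 * r + 1) by omega, ← this,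
      Finset.prod_map]
    refine Finset.prod_congr rfl fun i hi => ?_
    simp [addLeftEmbedding]
    ring
  rw [hprod]
  -- split the RHS product
  have hsplit : (∏ i ∈ Finset.Icc (r + 2) (2 * r + 3), (((c + (2 * r + 4) : ℕ) : ℝ) - (i : ℝ)))
      = (∏ i ∈ Finset.Icc (r + 2) (2 * r + 2), (((c + (2 * r + 4) : ℕ) : ℝ) - (i : ℝ)))
        * (((c + (2 * r + 4) : ℕ) : ℝ) - ((2 * r + 3 : ℕ) : ℝ)) :=
    Finset.prod_Icc_succ_top (by omega) _
  rw [hsplit]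
  -- double factorial and factorial recursions
  rw [Nat.doubleFactorial_add_two, show (2 * r + 3) = (2 * r + 2) + 1 from rfl, Nat.factorial_succ]
  have hF : ((Nat.factorial (2 * r + 2) : ℝ)) ≠ 0 := Nat.cast_ne_zero.mpr (Nat.factorial_ne_zero _)
  have h23 : ((2 * r + 2 + 1 : ℕ) : ℝ) ≠ 0 := by positivity
  set P := ∏ i ∈ Finset.Icc (r + 2) (2 * r + 2), (((c + (2 * r + 4) : ℕ) : ℝ) - (i : ℝ)) with hP
  push_cast
  field_simp
  ring
end
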